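/- Let h be a real random variable with law N(0, σ²), σ > 0. Then the law of max(h, 0)² is the mixture (1/2)·δ_0 + (1/2)·μ, where δ_0 is the Dirac measure at 0 and μ is the pushforward of the Gamma distribution with shape 1/2 and rate 1/2 (i.e. the chi-squared distribution with 1 degree of freedom) under the map t ↦ σ² t. -/

import Mathlib

open MeasureTheory ProbabilityTheory Real Set
open scoped NNReal ENNReal

private lemma my_lintegral_image {s : Set ℝ} {f f' : ℝ → ℝ} (hs : MeasurableSet s)
    (hf' : ∀ x ∈ s, HasDerivWithinAt f (f' x) s x) (hf : Set.InjOn f s) (g : ℝ → ℝ≥0∞) :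
    ∫⁻ x in f '' s, g x = ∫⁻ x in s, ENNReal.ofReal |f' x| * g (f x) := by
  simpa only [ContinuousLinearMap.det_toSpanSingleton] using
    lintegral_image_eq_lintegral_abs_det_fderiv_mul volume hs
      (fun x hx => (hf' x hx).hasFDerivWithinAt) hf g

private lemma gammaPDF_nonpos {x : ℝ} (hx : x ≤ 0) : gammaPDF (1/2) (1/2) x = 0 := by
  rcases lt_or_eq_of_le hx with hx' | hx'
  · exact gammaPDF_of_neg hx'
  · rw [hx', gammaPDF_of_nonneg le_rfl]
    rw [show ((1:ℝ)/2 - 1) = -(1/2) by norm_num, Real.zero_rpow (by norm_num)]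
    simp

private lemma gamma_Iic (z : ℝ) :
    gammaMeasure (1/2) (1/2) (Iic z) = ∫⁻ t in Ioc 0 z, gammaPDF (1/2) (1/2) t := by
  rw [gammaMeasure, withDensity_apply _ measurableSet_Iic]
  have hind : gammaPDF (1/2) (1/2) = (Ioi (0:ℝ)).indicator (gammaPDF (1/2) (1/2)) := by
    funext t
    by_cases ht : 0 < t
    · rw [indicator_of_mem (mem_Ioi.mpr ht)]
    · rw [indicator_of_notMem (by simpa using ht), gammaPDF_nonpos (not_lt.mp ht)]
  rw [hind, lintegral_indicator measurableSet_Ioi _,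
    Measure.restrict_restrict measurableSet_Ioi, Ioi_inter_Iic, ← hind]

private lemma gaussian_Iic_zero (v : ℝ≥0) (hv : v ≠ 0) :
    gaussianReal 0 v (Iic 0) = 1/2 := by
  have hmap := gaussianReal_map_const_mul (μ := 0) (v := v) (-1)
  have h1 : (NNReal.mk ((-1:ℝ)^2) (sq_nonneg _) * v : ℝ≥0) = v := by
    ext; norm_num
  rw [h1, mul_zero] at hmap
  have hsym : gaussianReal 0 v (Ici 0) = gaussianReal 0 v (Iic 0) := by
    conv_lhs => rw [← hmap]
    rw [Measure.map_apply (measurable_const_mul _) measurableSet_Ici]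
    congr 1
    ext t
    simp [neg_nonneg]
  have hzero : gaussianReal 0 v {0} = 0 := by
    rw [gaussianReal_of_var_ne_zero _ hv, withDensity_apply _ (measurableSet_singleton 0),
      Measure.restrict_eq_zero.mpr (measure_singleton 0)]
    simp
  have hsum : gaussianReal 0 v (Iic 0) + gaussianReal 0 v (Ici 0)
      = 1 + gaussianReal 0 v {0} := by
    rw [← measure_union_add_inter (Iic 0) measurableSet_Ici, Iic_union_Ici, Iic_inter_Ici,
      Icc_self, measure_univ]
  rw [hsym, hzero, add_zero, ← two_mul] at hsum
  rw [ENNReal.eq_div_iff (by norm_num) (by norm_num), hsum]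

/-- For `h ~ N(0, σ²)` with `σ > 0`, the squared ReLU output `max(h, 0)²` has
law `(1/2)·δ₀ + (1/2)·μ`, where `μ` is the pushforward of the chi-squared
distribution with one degree of freedom (the Gamma distribution with shape
`1/2` and rate `1/2`) under `t ↦ σ² t`. -/
theorem squared_relu_of_gaussian_law
    {Ω : Type*} [MeasureSpace Ω] [IsProbabilityMeasure (ℙ : Measure Ω)]
    (σ : ℝ≥0) (hσ : 0 < σ) (h : Ω → ℝ) (h_meas : Measurable h)
    (h_law : Measure.map h ℙ = gaussianReal 0 (σ ^ 2)) :
    Measure.map (fun ω => max (h ω) 0 ^ 2) ℙ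
      = (1 / 2 : ℝ≥0∞) • Measure.dirac (0 : ℝ)
        + (1 / 2 : ℝ≥0∞) • Measure.map (fun t => (σ : ℝ) ^ 2 * t)
            (gammaMeasure (1 / 2) (1 / 2)) := by
  have hσR : (0:ℝ) < (σ:ℝ) := hσ
  set c : ℝ := (σ:ℝ)^2 with hc
  have hc0 : (0:ℝ) < c := by positivity
  have hv : (σ^2 : ℝ≥0) ≠ 0 := pow_ne_zero _ hσ.ne'
  have hcv : ((σ^2 : ℝ≥0) : ℝ) = c := by push_cast [hc]; ring
  have hg_meas : Measurable (fun x : ℝ => max x 0 ^ 2) :=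
    (measurable_id.max measurable_const).pow_const 2
  have hmap : Measure.map (fun ω => max (h ω) 0 ^ 2) ℙ
      = Measure.map (fun x : ℝ => max x 0 ^ 2) (gaussianReal 0 (σ^2)) := by
    rw [show (fun ω => max (h ω) 0 ^ 2) = (fun x : ℝ => max x 0 ^ 2) ∘ h from rfl,
      ← Measure.map_map hg_meas h_meas, h_law]
  rw [hmap]
  have hprob : IsProbabilityMeasure
      (Measure.map (fun x : ℝ => max x 0 ^ 2) (gaussianReal 0 (σ^2))) :=
    Measure.isProbabilityMeasure_map hg_meas.aemeasurable
  refine Measure.ext_of_Iic _ _ (fun x => ?_)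
  rw [Measure.map_apply hg_meas measurableSet_Iic, Measure.add_apply, Measure.smul_apply,
    Measure.smul_apply, smul_eq_mul, smul_eq_mul, Measure.dirac_apply' _ measurableSet_Iic,
    Measure.map_apply (measurable_const_mul _) measurableSet_Iic]
  have hpre_mul : (fun t : ℝ => (σ:ℝ)^2 * t) ⁻¹' Iic x = Iic (x / c) := by
    ext t
    simp only [mem_preimage, mem_Iic, ← hc]
    rw [le_div_iff₀ hc0, mul_comm]
  rw [hpre_mul, gamma_Iic]
  by_cases hx : 0 ≤ x
  · -- preimage is Iic √x
    have hb := Real.sqrt_nonneg x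
    have hpre : (fun x' : ℝ => max x' 0 ^ 2) ⁻¹' Iic x = Iic (Real.sqrt x) := by
      ext t
      simp only [mem_preimage, mem_Iic]
      constructor
      · intro ht
        calc t ≤ max t 0 := le_max_left _ _
        _ = Real.sqrt (max t 0 ^ 2) := (Real.sqrt_sq (le_max_right _ _)).symm
        _ ≤ Real.sqrt x := Real.sqrt_le_sqrt ht
      · intro ht
        have h1 : max t 0 ≤ Real.sqrt x := max_le ht hb
        calc max t 0 ^ 2 ≤ Real.sqrt x ^ 2 := pow_le_pow_left₀ (le_max_right t 0) h1 2
        _ = x := Real.sq_sqrt hx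
    rw [hpre]
    -- split gaussian
    have hsplit : gaussianReal 0 (σ^2) (Iic (Real.sqrt x))
        = gaussianReal 0 (σ^2) (Iic 0) + gaussianReal 0 (σ^2) (Ioc 0 (Real.sqrt x)) := by
      rw [← Iic_union_Ioc_eq_Iic hb, measure_union (Iic_disjoint_Ioc le_rfl) measurableSet_Ioc]
    -- change of variables on the gamma side
    have hderiv : ∀ u ∈ Ioc (0:ℝ) (Real.sqrt x),
        HasDerivWithinAt (fun u : ℝ => u^2 / c) (2 * u / c) (Ioc 0 (Real.sqrt x)) u := by
      intro u _
      have := (hasDerivAt_pow 2 u).div_const c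
      simpa using this.hasDerivWithinAt
    have hinj : Set.InjOn (fun u : ℝ => u^2 / c) (Ioc 0 (Real.sqrt x)) := by
      intro u hu w hw huw
      have h2 : u^2 = w^2 := by
        field_simp at huw; linarith
      rw [← Real.sqrt_sq hu.1.le, ← Real.sqrt_sq hw.1.le, h2]
    have himg : (fun u : ℝ => u^2 / c) '' Ioc 0 (Real.sqrt x) = Ioc 0 (x / c) := by
      ext t
      simp only [mem_image, mem_Ioc]
      constructor
      · rintro ⟨u, ⟨hu0, hub⟩, rfl⟩
        refine ⟨by positivity, ?_⟩
        have h2 : u^2 ≤ x := by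
          calc u^2 ≤ Real.sqrt x ^ 2 := by gcongr
          _ = x := Real.sq_sqrt hx
        exact div_le_div_of_nonneg_right h2 hc0.le
      · rintro ⟨ht0, hty⟩
        refine ⟨Real.sqrt (c * t), ⟨by positivity, ?_⟩, ?_⟩
        · have hct : c * t ≤ x := by
            rw [mul_comm, ← le_div_iff₀ hc0]; exact hty
          exact Real.sqrt_le_sqrt hct
        · rw [Real.sq_sqrt (by positivity)]
          field_simp
    have hcv2 : ∀ u ∈ Ioc (0:ℝ) (Real.sqrt x),
        ENNReal.ofReal |2 * u / c| * gammaPDF (1/2) (1/2) (u^2 / c)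
          = 2 * gaussianPDF 0 (σ^2) u := by
      intro u hu
      have hu0 : (0:ℝ) < u := hu.1
      rw [gammaPDF_of_nonneg (by positivity), gaussianPDF,
        abs_of_nonneg (by positivity), ← ENNReal.ofReal_mul (by positivity),
        show (2:ℝ≥0∞) = ENNReal.ofReal (2:ℝ) by norm_num,
        ← ENNReal.ofReal_mul (by norm_num)]
      congr 1
      rw [gaussianPDFReal, hcv]
      have hGamma : Real.Gamma (1/2) = Real.sqrt π := Real.Gamma_one_half_eq
      have hr : ((1:ℝ)/2) ^ ((1:ℝ)/2) = (Real.sqrt 2)⁻¹ := by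
        rw [← Real.sqrt_eq_rpow, one_div, Real.sqrt_inv]
      have hexp : Real.exp (-(1/2 * (u^2 / c))) = Real.exp (-(u - 0)^2 / (2 * c)) := by
        congr 1; field_simp; ring
      have hpow : (u^2 / c) ^ ((1:ℝ)/2 - 1) = Real.sqrt c / u := by
        rw [show ((1:ℝ)/2 - 1) = -(1/2) by norm_num, Real.rpow_neg (by positivity),
          ← Real.sqrt_eq_rpow, Real.sqrt_div (sq_nonneg u), Real.sqrt_sq hu0.le, inv_div]
      have hsc : Real.sqrt c = (σ:ℝ) := by rw [hc, Real.sqrt_sq σ.coe_nonneg]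
      have hsqrt : Real.sqrt (2 * π * c) = Real.sqrt 2 * Real.sqrt π * (σ:ℝ) := by
        rw [Real.sqrt_mul (by positivity), Real.sqrt_mul (by norm_num), hsc]
      rw [hGamma, hr, hexp, hpow, hsc, hsqrt]
      have h2ne : Real.sqrt 2 ≠ 0 := by positivity
      have hπne : Real.sqrt π ≠ 0 := by positivity
      have hEne := Real.exp_ne_zero (-(u - 0)^2 / (2 * c))
      field_simp
      ring
    have hCoV : ∫⁻ t in Ioc 0 (x/c), gammaPDF (1/2) (1/2) t
        = 2 * gaussianReal 0 (σ^2) (Ioc 0 (Real.sqrt x)) := by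
      rw [← himg, my_lintegral_image measurableSet_Ioc hderiv hinj,
        setLIntegral_congr_fun measurableSet_Ioc hcv2,
        lintegral_const_mul 2 (measurable_gaussianPDF 0 (σ^2)),
        gaussianReal_of_var_ne_zero _ hv, withDensity_apply _ measurableSet_Ioc]
    rw [hCoV, hsplit, gaussian_Iic_zero _ hv, indicator_of_mem (mem_Iic.mpr hx)]
    have h12 : (1/2 : ℝ≥0∞) * 2 = 1 := by
      rw [one_div, ENNReal.inv_mul_cancel (by norm_num) (by norm_num)]
    rw [Pi.one_apply, mul_one, ← mul_assoc, h12, one_mul]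
  · have hx' : x < 0 := not_le.mp hx
    have hpre : (fun x' : ℝ => max x' 0 ^ 2) ⁻¹' Iic x = ∅ := by
      ext t
      simp only [mem_preimage, mem_Iic, mem_empty_iff_false, iff_false, not_le]
      nlinarith [sq_nonneg (max t 0)]
    have hIoc : Ioc (0:ℝ) (x/c) = ∅ :=
      Ioc_eq_empty (not_lt.mpr (le_of_lt (div_neg_of_neg_of_pos hx' hc0)))
    rw [hpre, hIoc, indicator_of_notMem (by simpa using hx)]
    simp
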